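/- If G is a double-critical 8-chromatic graph with minimum degree 10 and x is a vertex of G of degree 10, then the complement of the subgraph of G induced by the neighbourhood of x has maximum degree at most 3. -/

import Mathlib

/-- A connected graph `G` with chromatic number `k` is *double-critical* if for every
edge `uv` of `G`, deleting both `u` and `v` yields a graph that is `(k-2)`-colourable. -/
def SimpleGraph.DoubleCritical {V : Type*} (G : SimpleGraph V) (k : ℕ) : Prop :=
  G.Connected ∧ G.chromaticNumber = k ∧
    ∀ u v : V, G.Adj u v →
      (G.induce ({u, v}ᶜ : Set V)).chromaticNumber ≤ (k - 2 : ℕ)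

/-- In a double-critical 8-chromatic graph, every edge has at least 6 common neighbours. -/
lemma double_critical_common_neighbors {V : Type*} [Fintype V] [DecidableEq V]
    (G : SimpleGraph V) [DecidableRel G.Adj]
    (hχ : G.chromaticNumber = 8)
    (hDC : ∀ u v : V, G.Adj u v →
      (G.induce ({u, v}ᶜ : Set V)).chromaticNumber ≤ (6 : ℕ))
    {x y : V} (hxy : G.Adj x y) :
    6 ≤ Fintype.card {z : V // G.Adj x z ∧ G.Adj y z} := by
  classical
  set s : Set V := ({x, y}ᶜ : Set V) with hs
  have hmem : ∀ w : V, w ≠ x → w ≠ y → w ∈ s := by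
    intro w h1 h2
    simp [hs, h1, h2]
  have hcol : (G.induce s).Colorable 6 :=
    SimpleGraph.chromaticNumber_le_iff_colorable.mp (hDC x y hxy)
  obtain ⟨c⟩ := hcol
  have hmem' : ∀ z : V, G.Adj x z → G.Adj y z → z ∈ s := by
    intro z h1 h2
    exact hmem z (fun h => G.irrefl (h ▸ h1)) (fun h => G.irrefl (h ▸ h2))
  by_cases hall : ∀ i : Fin 6, ∃ z : V, ∃ h : G.Adj x z ∧ G.Adj y z,
      c ⟨z, hmem' z h.1 h.2⟩ = i
  · -- each colour appears on a common neighbour, so there are at least 6 of them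
    choose g hg hgc using hall
    have hinj : Function.Injective (fun i : Fin 6 => (⟨g i, hg i⟩ :
        {z : V // G.Adj x z ∧ G.Adj y z})) := by
      intro i j hij
      have : g i = g j := congrArg Subtype.val hij
      rw [← hgc i, ← hgc j]
      congr 1
      exact Subtype.ext this
    simpa using Fintype.card_le_of_injective _ hinj
  · -- some colour `i` misses the common neighbourhood: build a 7-colouring of `G`
    push_neg at hall
    obtain ⟨i, hi⟩ := hall
    have hvalid : ∀ (a b : V) (ha : a ∈ s) (hb : b ∈ s), G.Adj a b →
        c ⟨a, ha⟩ ≠ c ⟨b, hb⟩ := by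
      intro a b ha hb hab
      exact c.valid (by simpa using hab)
    let f : V → Fin 7 := fun w =>
      if hw : w = x then i.castSucc
      else if hw' : w = y then Fin.last 6
      else if c ⟨w, hmem w hw hw'⟩ = i ∧ G.Adj x w then Fin.last 6
      else (c ⟨w, hmem w hw hw'⟩).castSucc
    have hne : ∀ j : Fin 6, j.castSucc ≠ Fin.last 6 := by
      intro j
      exact (Fin.castSucc_lt_last j).ne
    have hfvalid : ∀ a b : V, G.Adj a b → f a ≠ f b := by
      intro a b hab heq
      simp only [f] at heq
      beta_reduce at heq
      by_cases ha1 : a = x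
      · rw [dif_pos ha1] at heq
        have hb1 : b ≠ x := fun h => G.ne_of_adj hab (ha1.trans h.symm)
        rw [dif_neg hb1] at heq
        by_cases hb2 : b = y
        · rw [dif_pos hb2] at heq
          exact hne i heq
        · rw [dif_neg hb2] at heq
          have hxb : G.Adj x b := by rwa [ha1] at hab
          by_cases hb3 : c ⟨b, hmem b hb1 hb2⟩ = i ∧ G.Adj x b
          · rw [if_pos hb3] at heq
            exact hne i heq
          · rw [if_neg hb3] at heq
            exact hb3 ⟨(Fin.castSucc_injective 6 heq).symm, hxb⟩
      · rw [dif_neg ha1] at heq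
        by_cases hb1 : b = x
        · rw [dif_pos hb1] at heq
          have hxa : G.Adj x a := by have h' := hab.symm; rwa [hb1] at h'
          by_cases ha2 : a = y
          · rw [dif_pos ha2] at heq
            exact hne i heq.symm
          · rw [dif_neg ha2] at heq
            by_cases ha3 : c ⟨a, hmem a ha1 ha2⟩ = i ∧ G.Adj x a
            · rw [if_pos ha3] at heq
              exact hne i heq.symm
            · rw [if_neg ha3] at heq
              exact ha3 ⟨Fin.castSucc_injective 6 heq, hxa⟩
        · rw [dif_neg hb1] at heq
          by_cases ha2 : a = y
          · rw [dif_pos ha2] at heq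
            have hb2 : b ≠ y := fun h => G.ne_of_adj hab (ha2.trans h.symm)
            rw [dif_neg hb2] at heq
            have hyb : G.Adj y b := by rwa [ha2] at hab
            by_cases hb3 : c ⟨b, hmem b hb1 hb2⟩ = i ∧ G.Adj x b
            · exact hi b ⟨hb3.2, hyb⟩ hb3.1
            · rw [if_neg hb3] at heq
              exact hne _ heq.symm
          · rw [dif_neg ha2] at heq
            by_cases hb2 : b = y
            · rw [dif_pos hb2] at heq
              have hya : G.Adj y a := by have h' := hab.symm; rwa [hb2] at h'
              by_cases ha3 : c ⟨a, hmem a ha1 ha2⟩ = i ∧ G.Adj x a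
              · exact hi a ⟨ha3.2, hya⟩ ha3.1
              · rw [if_neg ha3] at heq
                exact hne _ heq
            · rw [dif_neg hb2] at heq
              by_cases ha3 : c ⟨a, hmem a ha1 ha2⟩ = i ∧ G.Adj x a
              · rw [if_pos ha3] at heq
                by_cases hb3 : c ⟨b, hmem b hb1 hb2⟩ = i ∧ G.Adj x b
                · exact hvalid a b _ _ hab (ha3.1.trans hb3.1.symm)
                · rw [if_neg hb3] at heq
                  exact hne _ heq.symm
              · rw [if_neg ha3] at heq
                by_cases hb3 : c ⟨b, hmem b hb1 hb2⟩ = i ∧ G.Adj x b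
                · rw [if_pos hb3] at heq
                  exact hne _ heq
                · rw [if_neg hb3] at heq
                  exact hvalid a b _ _ hab (Fin.castSucc_injective 6 heq)
    have h7 : G.Colorable 7 := ⟨SimpleGraph.Coloring.mk f fun {a b} h => hfvalid a b h⟩
    have := SimpleGraph.chromaticNumber_le_iff_colorable.mpr h7
    rw [hχ] at this
    norm_num at this

/-- If `G` is a double-critical 8-chromatic graph with minimum degree 10 and `x` is a
vertex of degree 10, then the complement of the neighbourhood graph of `x` has maximum
degree at most 3. -/
theorem double_critical_eight_chromatic_neighborhood_compl_maxDegree_le_three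
    {V : Type*} [Fintype V] [DecidableEq V] (G : SimpleGraph V) [DecidableRel G.Adj]
    (hG : G.DoubleCritical 8) (hδ : G.minDegree = 10)
    (x : V) (hx : G.degree x = 10) :
    ((G.induce (G.neighborSet x))ᶜ).maxDegree ≤ 3 := by
  classical
  obtain ⟨-, hχ, hDC⟩ := hG
  apply SimpleGraph.maxDegree_le_of_forall_degree_le
  intro y
  have hxy : G.Adj x ↑y := y.2
  have h6 := double_critical_common_neighbors G hχ hDC hxy
  -- degree of y in the induced neighbourhood graph is at least 6
  have hdeg : 6 ≤ (G.induce (G.neighborSet x)).degree y := by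
    rw [← SimpleGraph.card_neighborSet_eq_degree]
    refine le_trans h6 (Fintype.card_le_of_injective
      (fun z => ⟨⟨z.1, z.2.1⟩, by simpa using z.2.2⟩) ?_)
    intro a b hab
    simp only [Subtype.mk.injEq] at hab
    have hab2 := congrArg Subtype.val hab
    exact Subtype.ext hab2
  have hcard : Fintype.card ↥(G.neighborSet x) = 10 := by
    rw [SimpleGraph.card_neighborSet_eq_degree, hx]
  have := SimpleGraph.degree_compl (G := G.induce (G.neighborSet x)) (v := y)
  rw [hcard] at this
  omega
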